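/- Let L ∈ [0,1]^{k×d} and consider the bandit game, where the signal equals the loss (Φ = L). Fix η > 0 and a probability vector q ∈ ℝ^k with q_a > 0 for all a. Set p = q and G(a,σ) = σ e_a for a ∈ [k], σ ∈ [0,1]. Then for every x ∈ [d]: (i) Σ_{a=1}^k G(a, L_{a,x}) = L e_x, so the loss-difference estimator is unbiased and the bias term of the optimisation objective vanishes; and (ii) (1/η²) Σ_{a=1}^k q_a Ψ_q( η L_{a,x} e_a / q_a ) ≤ k/2. Consequently the optimisation objective of the exploration-by-optimisation problem at (p, G) is at most k/2 for every outcome x, so opt_q(η) ≤ k/2. -/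

import Mathlib

/-- `Ψ_q(z) = ∑_a q_a (exp(-z_a) + z_a - 1)`. -/
noncomputable def Psi {k : ℕ} (q z : Fin k → ℝ) : ℝ :=
  ∑ a, q a * (Real.exp (-z a) + z a - 1)

lemma exp_neg_quadratic (t : ℝ) (ht0 : 0 ≤ t) : Real.exp (-t) + t - 1 ≤ t ^ 2 / 2 := by
  set f : ℝ → ℝ := fun t => t ^ 2 / 2 - Real.exp (-t) - t + 1 with hf
  have h : ∀ t : ℝ, HasDerivAt f (t + Real.exp (-t) - 1) t := by
    intro t
    have h1 : HasDerivAt (fun t : ℝ => t ^ 2 / 2) t t := by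
      simpa using (hasDerivAt_pow 2 t).div_const 2
    have h2 : HasDerivAt (fun t : ℝ => Real.exp (-t)) (-Real.exp (-t)) t := by
      simpa using (hasDerivAt_neg t).exp
    have := ((h1.sub h2).sub (hasDerivAt_id t)).add_const 1
    exact this.congr_deriv (by ring)
  have hdiff : Differentiable ℝ f := fun t => (h t).differentiableAt
  have hmono : Monotone f := by
    refine monotone_of_deriv_nonneg hdiff fun t => ?_
    rw [(h t).deriv]
    nlinarith [Real.add_one_le_exp (-t)]
  have := hmono ht0
  simp only [hf] at this
  simp at this
  nlinarith

/-- Bandit game: the signal equals the loss, `p = q` and `G(a,σ) = σ e_a`.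
The estimator is unbiased, the bias term vanishes, the stability term is at
most `k/2`, and hence the exploration-by-optimisation objective at `(p, G)`
is at most `k/2` for every outcome, so `opt_q(η) ≤ k/2`. -/
theorem stmt5 (k d : ℕ) (hk : 0 < k) (hd : 0 < d)
    (L : Fin k → Fin d → ℝ) (hL : ∀ a x, L a x ∈ Set.Icc (0 : ℝ) 1)
    (η : ℝ) (hη : 0 < η)
    (q : Fin k → ℝ) (hq0 : ∀ a, 0 < q a) (hq1 : ∑ a, q a = 1)
    (G : Fin k → ℝ → Fin k → ℝ)
    (hGdef : ∀ a σ b, G a σ b = if b = a then σ else 0) :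
    ∀ x : Fin d,
      -- (i) unbiasedness: `∑_a G(a, Φ_{a,x}) = L e_x`
      (∀ b, ∑ a, G a (L a x) b = L b x) ∧
      -- the bias term of the objective vanishes
      ((∑ b, q b * (L b x - ∑ a, G a (L a x) b))
          + (⨆ c : Fin k, ((∑ a, G a (L a x) c) - L c x)) = 0) ∧
      -- (ii) the stability term is at most `k/2`
      ((1 / η ^ 2) * ∑ a, q a * Psi q (fun b => η * G a (L a x) b / q a)
          ≤ k / 2) ∧
      -- the whole objective at `(p, G)` with `p = q` is at most `k/2`
      (((∑ a, (q a - q a) * L a x)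
            + ((∑ b, q b * (L b x - ∑ a, G a (L a x) b))
              + (⨆ c : Fin k, ((∑ a, G a (L a x) c) - L c x)))) / η
          + (1 / η ^ 2) * ∑ a, q a * Psi q (fun b => η * G a (L a x) b / q a)
          ≤ k / 2) := by
  intro x
  haveI : Nonempty (Fin k) := ⟨⟨0, hk⟩⟩
  have hunb : ∀ b, ∑ a, G a (L a x) b = L b x := by
    intro b
    simp [hGdef]
  have hbias : (∑ b, q b * (L b x - ∑ a, G a (L a x) b))
      + (⨆ c : Fin k, ((∑ a, G a (L a x) c) - L c x)) = 0 := by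
    have h1 : (∑ b, q b * (L b x - ∑ a, G a (L a x) b)) = 0 := by
      apply Finset.sum_eq_zero
      intro b _
      rw [hunb b]
      ring
    have h2 : (⨆ c : Fin k, ((∑ a, G a (L a x) c) - L c x)) = 0 := by
      have : ∀ c : Fin k, (∑ a, G a (L a x) c) - L c x = 0 := fun c => by
        rw [hunb c]; ring
      simp [this]
    rw [h1, h2, add_zero]
  have hstab : (1 / η ^ 2) * ∑ a, q a * Psi q (fun b => η * G a (L a x) b / q a)
      ≤ k / 2 := by
    have key : ∀ a, q a * Psi q (fun b => η * G a (L a x) b / q a) ≤ η ^ 2 / 2 := by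
      intro a
      have hqa := hq0 a
      have hPsi : Psi q (fun b => η * G a (L a x) b / q a)
          = q a * (Real.exp (-(η * L a x / q a)) + η * L a x / q a - 1) := by
        unfold Psi
        rw [Finset.sum_eq_single a]
        · simp [hGdef]
        · intro b _ hb
          simp [hGdef, hb]
        · simp
      rw [hPsi]
      set t := η * L a x / q a with htdef
      have ht : 0 ≤ t := by
        apply div_nonneg _ hqa.le
        exact mul_nonneg hη.le (hL a x).1
      have hexp := exp_neg_quadratic t ht
      have hstep : q a * (q a * (Real.exp (-t) + t - 1)) ≤ q a ^ 2 * (t ^ 2 / 2) := by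
        nlinarith
      refine hstep.trans ?_
      have : q a ^ 2 * (t ^ 2 / 2) = (η * L a x) ^ 2 / 2 := by
        field_simp [htdef]
        rw [htdef, div_pow, mul_pow]; field_simp [hqa.ne']
      rw [this]
      have hL1 : (L a x) ^ 2 ≤ 1 := by
        have h0 := (hL a x).1
        have h1 := (hL a x).2
        nlinarith
      have : (η * L a x) ^ 2 = η ^ 2 * (L a x) ^ 2 := by ring
      rw [this]
      nlinarith [sq_nonneg η]
    have hsum : ∑ a, q a * Psi q (fun b => η * G a (L a x) b / q a)
        ≤ ∑ _a : Fin k, η ^ 2 / 2 := Finset.sum_le_sum fun a _ => key a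
    have hsum2 : ∑ _a : Fin k, η ^ 2 / 2 = k * (η ^ 2 / 2) := by
      simp [mul_comm]
    have hη2 : (0:ℝ) < η ^ 2 := by positivity
    calc (1 / η ^ 2) * ∑ a, q a * Psi q (fun b => η * G a (L a x) b / q a)
        ≤ (1 / η ^ 2) * ((k : ℝ) * (η ^ 2 / 2)) := by
          apply mul_le_mul_of_nonneg_left _ (by positivity)
          rw [← hsum2]; exact hsum
      _ = (k : ℝ) / 2 := by field_simp
  refine ⟨hunb, hbias, hstab, ?_⟩
  have h0 : (∑ a, (q a - q a) * L a x) = 0 := by simp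
  rw [h0, hbias, zero_add, zero_div, zero_add]
  exact hstab
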